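/- Fix 0 < μ < v̄. The supremum, over posted prices v₁ ∈ [0, v̄], of the competitive ratio inf_{F ∈ 𝓕_mean} v₁·F([v₁, v̄]) / OPT(F) of the deterministic posted-price mechanism over the mean ambiguity set equals 𝓡₁ = 1 − √(1 − μ/v̄), and it is attained at the price v₁ = v̄ − √(v̄² − μ·v̄). -/

import Mathlib

open MeasureTheory Set

noncomputable section

/-- Hindsight optimal revenue: `OPT(F) = sup_{p ∈ [0, v̄]} p · F([p, v̄])`. -/
def hindsightOpt (vbar : ℝ) (F : Measure ℝ) : ℝ :=
  ⨆ p : Icc (0 : ℝ) vbar, (p : ℝ) * (F (Icc (p : ℝ) vbar)).toReal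

/-- The mean ambiguity set: probability measures on `[0, v̄]` with mean at least `μ`. -/
def Fmean (μ vbar : ℝ) : Set (Measure ℝ) :=
  {F | IsProbabilityMeasure F ∧ F (Icc (0 : ℝ) vbar) = 1 ∧ μ ≤ ∫ t, t ∂F}

/-- Competitive ratio of the deterministic posted price `v1` over the mean ambiguity set. -/
def postCR (μ vbar v1 : ℝ) : ℝ :=
  ⨅ F : ↥(Fmean μ vbar), v1 * (F.1 (Icc v1 vbar)).toReal / hindsightOpt vbar F.1

namespace Stmt5Aux

lemma meas_toReal_le_one (F : Measure ℝ) [IsProbabilityMeasure F] (s : Set ℝ) :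
    (F s).toReal ≤ 1 := by
  have h1 : F s ≤ 1 := prob_le_one
  calc (F s).toReal ≤ (1 : ENNReal).toReal := ENNReal.toReal_mono ENNReal.one_ne_top h1
    _ = 1 := by simp

lemma hindsightOpt_bdd (vbar : ℝ) (F : Measure ℝ) [IsProbabilityMeasure F] :
    BddAbove (Set.range fun p : Icc (0:ℝ) vbar => (p : ℝ) * (F (Icc (p : ℝ) vbar)).toReal) := by
  refine ⟨vbar, ?_⟩
  rintro x ⟨⟨p, hp0, hp1⟩, rfl⟩
  calc p * (F (Icc p vbar)).toReal ≤ p * 1 :=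
        mul_le_mul_of_nonneg_left (meas_toReal_le_one F _) hp0
    _ ≤ vbar := by linarith

lemma hindsightOpt_ge (vbar : ℝ) (F : Measure ℝ) [IsProbabilityMeasure F] {p : ℝ}
    (hp : p ∈ Icc (0:ℝ) vbar) : p * (F (Icc p vbar)).toReal ≤ hindsightOpt vbar F :=
  le_ciSup (hindsightOpt_bdd vbar F) (⟨p, hp⟩ : Icc (0:ℝ) vbar)

lemma hindsightOpt_nonneg (vbar : ℝ) (hv : 0 ≤ vbar) (F : Measure ℝ) [IsProbabilityMeasure F] :
    0 ≤ hindsightOpt vbar F := by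
  have := hindsightOpt_ge vbar F (p := 0) ⟨le_rfl, hv⟩
  simpa using this

lemma integrable_id_of_supp (vbar : ℝ) (hv : 0 ≤ vbar) (F : Measure ℝ) [IsProbabilityMeasure F]
    (hsupp : F (Icc (0:ℝ) vbar) = 1) : Integrable (fun t : ℝ => t) F := by
  have hae : ∀ᵐ t ∂F, t ∈ Icc (0:ℝ) vbar := by
    have h0 : F (Icc (0:ℝ) vbar)ᶜ = 0 := (prob_compl_eq_zero_iff measurableSet_Icc).2 hsupp
    rw [ae_iff]
    convert h0 using 2
    rfl
  refine Integrable.mono' (integrable_const vbar) aestronglyMeasurable_id ?_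
  filter_upwards [hae] with t ht
  rw [Real.norm_eq_abs, abs_le]
  exact ⟨by linarith [ht.1], ht.2⟩

lemma mean_le_bound (vbar p : ℝ) (hp : p ∈ Icc (0:ℝ) vbar) (F : Measure ℝ)
    [IsProbabilityMeasure F] (hsupp : F (Icc (0:ℝ) vbar) = 1) :
    ∫ t, t ∂F ≤ p + (vbar - p) * (F (Icc p vbar)).toReal := by
  have hae : ∀ᵐ t ∂F, t ∈ Icc (0:ℝ) vbar := by
    have h0 : F (Icc (0:ℝ) vbar)ᶜ = 0 := (prob_compl_eq_zero_iff measurableSet_Icc).2 hsupp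
    rw [ae_iff]
    convert h0 using 2
    rfl
  have hid : Integrable (fun t : ℝ => t) F := integrable_id_of_supp vbar (hp.1.trans hp.2) F hsupp
  have hind : Integrable (fun t : ℝ => (Icc p vbar).indicator (fun _ => vbar - p) t) F :=
    (integrable_const (vbar - p)).indicator measurableSet_Icc
  have hg : Integrable (fun t : ℝ => p + (Icc p vbar).indicator (fun _ => vbar - p) t) F :=
    (integrable_const p).add hind
  have hle : ∀ᵐ t ∂F, t ≤ p + (Icc p vbar).indicator (fun _ => vbar - p) t := by
    filter_upwards [hae] with t ht
    by_cases hmem : t ∈ Icc p vbar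
    · rw [Set.indicator_of_mem hmem]
      linarith [ht.2]
    · rw [Set.indicator_of_notMem hmem]
      have h2 : ¬ (p ≤ t ∧ t ≤ vbar) := hmem
      push_neg at h2
      rcases le_or_gt p t with h | h
      · linarith [h2 h, ht.2]
      · linarith
  calc ∫ t, t ∂F ≤ ∫ t, (p + (Icc p vbar).indicator (fun _ => vbar - p) t) ∂F :=
        integral_mono_ae hid hg hle
    _ = p + (vbar - p) * (F (Icc p vbar)).toReal := by
        rw [integral_add (integrable_const p) hind, integral_const,
          integral_indicator_const _ measurableSet_Icc]
        simp [mul_comm]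
        left; rfl

/-- Two point distribution on `{a, b}` with mass `1-q` at `a` and `q` at `b`. -/
def twoPoint (a b q : ℝ) : Measure ℝ :=
  ENNReal.ofReal (1-q) • Measure.dirac a + ENNReal.ofReal q • Measure.dirac b

lemma twoPoint_apply (a b q : ℝ) (s : Set ℝ) :
    twoPoint a b q s =
      ENNReal.ofReal (1-q) * (Measure.dirac a s) + ENNReal.ofReal q * (Measure.dirac b s) := by
  simp [twoPoint]

lemma twoPoint_apply_mem_mem (a b q : ℝ) (hq0 : 0 ≤ q) (hq1 : q ≤ 1) {s : Set ℝ}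
    (ha : a ∈ s) (hb : b ∈ s) : twoPoint a b q s = 1 := by
  rw [twoPoint_apply, Measure.dirac_apply_of_mem ha, Measure.dirac_apply_of_mem hb,
    mul_one, mul_one, ← ENNReal.ofReal_add (by linarith) hq0]
  norm_num

lemma twoPoint_apply_not_mem (a b q : ℝ) {s : Set ℝ} (hs : MeasurableSet s)
    (ha : a ∉ s) (hb : b ∈ s) : twoPoint a b q s = ENNReal.ofReal q := by
  rw [twoPoint_apply, Measure.dirac_apply_of_mem hb, Measure.dirac_apply' _ hs,
    Set.indicator_of_notMem ha]
  simp

lemma twoPoint_prob (a b q : ℝ) (hq0 : 0 ≤ q) (hq1 : q ≤ 1) :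
    IsProbabilityMeasure (twoPoint a b q) :=
  ⟨twoPoint_apply_mem_mem a b q hq0 hq1 (mem_univ a) (mem_univ b)⟩

lemma twoPoint_integral (a b q : ℝ) (hq0 : 0 ≤ q) (hq1 : q ≤ 1) :
    ∫ t, t ∂(twoPoint a b q) = (1-q)*a + q*b := by
  have hint : ∀ c : ℝ, Integrable (fun t : ℝ => t) (Measure.dirac c) := by
    intro c
    have h : (fun t : ℝ => t) =ᵐ[Measure.dirac c] (fun _ => c) := by
      rw [Filter.EventuallyEq, MeasureTheory.ae_dirac_eq]; exact Filter.eventually_pure.2 rfl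
    exact (integrable_const c).congr h.symm
  rw [twoPoint, integral_add_measure ((hint a).smul_measure ENNReal.ofReal_ne_top)
    ((hint b).smul_measure ENNReal.ofReal_ne_top),
    integral_smul_measure, integral_smul_measure, integral_dirac, integral_dirac,
    ENNReal.toReal_ofReal (by linarith), ENNReal.toReal_ofReal hq0]
  simp [smul_eq_mul]

lemma twoPoint_mem_Fmean (μ vbar a b q : ℝ) (hq0 : 0 ≤ q) (hq1 : q ≤ 1)
    (ha : a ∈ Icc (0:ℝ) vbar) (hb : b ∈ Icc (0:ℝ) vbar)
    (hmean : μ ≤ (1-q)*a + q*b) : twoPoint a b q ∈ Fmean μ vbar :=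
  ⟨twoPoint_prob a b q hq0 hq1,
   twoPoint_apply_mem_mem a b q hq0 hq1 ha hb,
   by rw [twoPoint_integral a b q hq0 hq1]; exact hmean⟩

lemma postCR_bddBelow (μ vbar : ℝ) (hv : 0 ≤ vbar) (v1 : ℝ) (hv1 : 0 ≤ v1) :
    BddBelow (Set.range fun F : ↥(Fmean μ vbar) =>
      v1 * (F.1 (Icc v1 vbar)).toReal / hindsightOpt vbar F.1) := by
  refine ⟨0, ?_⟩
  rintro x ⟨⟨F, hF⟩, rfl⟩
  haveI := hF.1
  exact div_nonneg (mul_nonneg hv1 ENNReal.toReal_nonneg) (hindsightOpt_nonneg vbar hv F)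

end Stmt5Aux

open Stmt5Aux

set_option maxHeartbeats 1600000 in
/-- The optimal posted price under the mean ambiguity set is `v₁ = v̄ - √(v̄² - μv̄)`, achieving
the optimal competitive ratio `𝓡₁ = 1 - √(1 - μ/v̄)`. -/
theorem stmt5 (μ vbar : ℝ) (hμ : 0 < μ) (hμv : μ < vbar) :
    postCR μ vbar (vbar - Real.sqrt (vbar ^ 2 - μ * vbar)) = 1 - Real.sqrt (1 - μ / vbar) ∧
    ∀ v1 ∈ Icc (0 : ℝ) vbar, postCR μ vbar v1 ≤ 1 - Real.sqrt (1 - μ / vbar) := by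
  have hvb : 0 < vbar := hμ.trans hμv
  set s : ℝ := Real.sqrt (1 - μ / vbar) with hs_def
  set R : ℝ := 1 - s with hR_def
  set v1s : ℝ := vbar - Real.sqrt (vbar ^ 2 - μ * vbar) with hv1s_def
  have harg : 0 ≤ 1 - μ / vbar := by
    have : μ / vbar < 1 := (div_lt_one hvb).2 hμv
    linarith
  have hs0 : 0 ≤ s := Real.sqrt_nonneg _
  have hs2 : s ^ 2 = 1 - μ / vbar := Real.sq_sqrt harg
  have hspos : 0 < s := Real.sqrt_pos.2 (by
    have : μ / vbar < 1 := (div_lt_one hvb).2 hμv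
    linarith)
  have hs1 : s < 1 := by nlinarith [div_pos hμ hvb]
  have hR0 : 0 < R := by rw [hR_def]; linarith
  have hR1 : R < 1 := by rw [hR_def]; linarith
  have hsqrt : Real.sqrt (vbar ^ 2 - μ * vbar) = s * vbar := by
    have h : vbar ^ 2 - μ * vbar = (s * vbar) ^ 2 := by
      rw [mul_pow, hs2]; field_simp
    rw [h, Real.sqrt_sq (by positivity)]
  have hv1s : v1s = R * vbar := by rw [hv1s_def, hsqrt, hR_def]; ring
  have hv1spos : 0 < v1s := by rw [hv1s]; positivity
  have hv1slt : v1s < vbar := by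
    rw [hv1s]; nlinarith
  have hμR : μ = (2*R - R^2) * vbar := by
    have h : (1 - R) ^ 2 = 1 - μ / vbar := by rw [hR_def]; simpa using hs2
    have hv : vbar ≠ 0 := ne_of_gt hvb
    field_simp at h
    nlinarith [h]
  have hkey : μ - v1s = R * (vbar - v1s) := by rw [hv1s]; nlinarith [hμR]
  -- lower bound: every F in Fmean has ratio at least R at price v1s
  have hlow : ∀ F ∈ Fmean μ vbar,
      R ≤ v1s * (F (Icc v1s vbar)).toReal / hindsightOpt vbar F := by
    intro F hF
    obtain ⟨hP, hsupp, hmean⟩ := hF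
    haveI := hP
    set q : ℝ := (F (Icc v1s vbar)).toReal with hq_def
    have hq0 : 0 ≤ q := ENNReal.toReal_nonneg
    have hv1smem : v1s ∈ Icc (0:ℝ) vbar := ⟨hv1spos.le, hv1slt.le⟩
    have hμle : μ ≤ v1s + (vbar - v1s) * q :=
      hmean.trans (mean_le_bound vbar v1s hv1smem F hsupp)
    have hqR : R ≤ q := by nlinarith [hkey, hv1slt]
    have hOPT1 : v1s * q ≤ hindsightOpt vbar F := hindsightOpt_ge vbar F hv1smem
    have hOPTpos : 0 < hindsightOpt vbar F :=
      lt_of_lt_of_le (mul_pos hv1spos (hR0.trans_le hqR)) hOPT1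
    have hOPTle : hindsightOpt vbar F ≤ max v1s (vbar * q) := by
      have hne : Nonempty (Icc (0:ℝ) vbar) := ⟨⟨0, le_rfl, hvb.le⟩⟩
      apply ciSup_le
      rintro ⟨p, hp0, hp1⟩
      rcases le_or_gt p v1s with h | h
      · refine le_max_of_le_left ?_
        calc p * (F (Icc p vbar)).toReal ≤ p * 1 :=
              mul_le_mul_of_nonneg_left (meas_toReal_le_one F _) hp0
          _ ≤ v1s := by linarith
      · refine le_max_of_le_right ?_
        have hmono : (F (Icc p vbar)).toReal ≤ q :=
          ENNReal.toReal_mono (measure_ne_top F _)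
            (measure_mono (Icc_subset_Icc_left h.le))
        exact mul_le_mul hp1 hmono ENNReal.toReal_nonneg hvb.le
    rw [le_div_iff₀ hOPTpos]
    have h1 : R * hindsightOpt vbar F ≤ R * max v1s (vbar * q) :=
      mul_le_mul_of_nonneg_left hOPTle hR0.le
    have h2 : R * max v1s (vbar * q) ≤ v1s * q := by
      rcases max_choice v1s (vbar * q) with h | h <;> rw [h]
      · nlinarith
      · nlinarith [hv1s]
    linarith
  -- the base two-point distribution at {0, vbar}
  set q0 : ℝ := μ / vbar with hq0_def
  have hq00 : 0 ≤ q0 := by positivity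
  have hq01 : q0 ≤ 1 := by rw [hq0_def]; rw [div_le_one hvb]; linarith
  have hF0mem : twoPoint 0 vbar q0 ∈ Fmean μ vbar := by
    refine twoPoint_mem_Fmean μ vbar 0 vbar q0 hq00 hq01 ⟨le_rfl, hvb.le⟩ ⟨hvb.le, le_rfl⟩ ?_
    rw [hq0_def]; field_simp; simp
  have hF0opt : μ ≤ hindsightOpt vbar (twoPoint 0 vbar q0) := by
    haveI := twoPoint_prob 0 vbar q0 hq00 hq01
    have h := hindsightOpt_ge vbar (twoPoint 0 vbar q0) (p := vbar) ⟨hvb.le, le_rfl⟩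
    have hval : twoPoint 0 vbar q0 (Icc vbar vbar) = ENNReal.ofReal q0 := by
      refine twoPoint_apply_not_mem 0 vbar q0 measurableSet_Icc ?_ ⟨le_rfl, le_rfl⟩
      simp only [mem_Icc]
      push_neg
      intro h'
      linarith
    rw [hval, ENNReal.toReal_ofReal hq00] at h
    calc μ = vbar * q0 := by rw [hq0_def]; field_simp
      _ ≤ _ := h
  -- ratio of the base distribution at any price 0 < v1 ≤ vbar
  have hF0ratio : ∀ v1 : ℝ, 0 < v1 → v1 ≤ vbar →
      v1 * (twoPoint 0 vbar q0 (Icc v1 vbar)).toReal / hindsightOpt vbar (twoPoint 0 vbar q0)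
        ≤ v1 / vbar := by
    intro v1 hv10 hv1v
    have hval : twoPoint 0 vbar q0 (Icc v1 vbar) = ENNReal.ofReal q0 := by
      refine twoPoint_apply_not_mem 0 vbar q0 measurableSet_Icc ?_ ⟨hv1v, le_rfl⟩
      simp only [mem_Icc]
      push_neg
      intro h'
      linarith
    rw [hval, ENNReal.toReal_ofReal hq00]
    calc v1 * q0 / hindsightOpt vbar (twoPoint 0 vbar q0)
        ≤ v1 * q0 / μ :=
          div_le_div_of_nonneg_left (mul_nonneg hv10.le hq00) hμ hF0opt
      _ = v1 / vbar := by rw [hq0_def]; field_simp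
  haveI hne : Nonempty ↥(Fmean μ vbar) := ⟨⟨twoPoint 0 vbar q0, hF0mem⟩⟩
  constructor
  · -- postCR at v1s equals R
    apply le_antisymm
    · refine le_trans (ciInf_le (postCR_bddBelow μ vbar hvb.le v1s hv1spos.le)
        ⟨twoPoint 0 vbar q0, hF0mem⟩) ?_
      have := hF0ratio v1s hv1spos hv1slt.le
      calc v1s * (twoPoint 0 vbar q0 (Icc v1s vbar)).toReal /
            hindsightOpt vbar (twoPoint 0 vbar q0) ≤ v1s / vbar := this
        _ = R := by rw [hv1s]; field_simp
    · exact le_ciInf fun ⟨F, hF⟩ => hlow F hF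
  · -- all prices are at most R
    intro v1 hv1
    obtain ⟨h0, h1⟩ := hv1
    -- helper: suffices to exhibit one F with small ratio
    have key : ∀ F ∈ Fmean μ vbar,
        v1 * (F (Icc v1 vbar)).toReal / hindsightOpt vbar F ≤ R → postCR μ vbar v1 ≤ R :=
      fun F hF h => le_trans (ciInf_le (postCR_bddBelow μ vbar hvb.le v1 h0) ⟨F, hF⟩) h
    rcases eq_or_lt_of_le h0 with h0' | h0'
    · -- v1 = 0
      refine key (twoPoint 0 vbar q0) hF0mem ?_
      rw [← h0']
      simp only [zero_mul, zero_div]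
      exact hR0.le
    rcases le_or_gt v1 v1s with hcase | hcase
    · -- 0 < v1 ≤ v1s : base distribution
      refine key (twoPoint 0 vbar q0) hF0mem ?_
      refine le_trans (hF0ratio v1 h0' h1) ?_
      rw [show R = v1s / vbar by rw [hv1s]; field_simp]
      gcongr
    rcases le_or_gt v1 μ with hcase2 | hcase2
    · -- v1s < v1 ≤ μ : two-point distribution at {a, vbar} with a slightly below v1
      have hψcont : Continuous fun a : ℝ => R * (a * (vbar - a)) - v1 * (μ - a) :=
        Continuous.sub
          (continuous_const.mul (continuous_id.mul (continuous_const.sub continuous_id)))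
          (continuous_const.mul (continuous_const.sub continuous_id))
      have hψv1 : 0 < R * (v1 * (vbar - v1)) - v1 * (μ - v1) := by
        have hx : 0 < v1 * ((1 - R) * (v1 - v1s)) :=
          mul_pos h0' (mul_pos (by linarith) (by linarith))
        nlinarith [hμR, hv1s]
      have hev : ∀ᶠ a in nhds v1, 0 < R * (a * (vbar - a)) - v1 * (μ - a) :=
        (hψcont.tendsto v1).eventually (eventually_gt_nhds hψv1)
      have hev2 : ∀ᶠ a in nhdsWithin v1 (Iio v1), a ∈ Ioo v1s v1 :=
        Filter.eventually_of_mem (Ioo_mem_nhdsLT_of_mem ⟨hcase, le_rfl⟩) fun x hx => hx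
      obtain ⟨a, hψa, ha⟩ := ((hev.filter_mono nhdsWithin_le_nhds).and hev2).exists
      obtain ⟨hav1s, hav1⟩ := ha
      have ha0 : 0 < a := hv1spos.trans hav1s
      have havb : a < vbar := lt_of_lt_of_le (hav1.trans_le hcase2) hμv.le
      have haμ : a < μ := hav1.trans_le hcase2
      set qa : ℝ := (μ - a) / (vbar - a) with hqa_def
      have hvba : 0 < vbar - a := by linarith
      have hqa0 : 0 ≤ qa := div_nonneg (by linarith) hvba.le
      have hqa1 : qa ≤ 1 := by rw [hqa_def, div_le_one hvba]; linarith
      have hFa_mem : twoPoint a vbar qa ∈ Fmean μ vbar := by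
        refine twoPoint_mem_Fmean μ vbar a vbar qa hqa0 hqa1 ⟨ha0.le, havb.le⟩
          ⟨hvb.le, le_rfl⟩ ?_
        have heq : (1 - qa)*a + qa*vbar = μ := by
          rw [hqa_def]; field_simp; ring
        rw [heq]
      refine key (twoPoint a vbar qa) hFa_mem ?_
      haveI := twoPoint_prob a vbar qa hqa0 hqa1
      have hval : twoPoint a vbar qa (Icc v1 vbar) = ENNReal.ofReal qa := by
        refine twoPoint_apply_not_mem a vbar qa measurableSet_Icc ?_ ⟨h1, le_rfl⟩
        simp only [mem_Icc]
        push_neg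
        intro h'
        linarith
      have hOPTa : a ≤ hindsightOpt vbar (twoPoint a vbar qa) := by
        have h := hindsightOpt_ge vbar (twoPoint a vbar qa) (p := a) ⟨ha0.le, havb.le⟩
        rw [twoPoint_apply_mem_mem a vbar qa hqa0 hqa1 (s := Icc a vbar)
          (left_mem_Icc.2 havb.le) (right_mem_Icc.2 havb.le)] at h
        simpa using h
      rw [hval, ENNReal.toReal_ofReal hqa0]
      have hnum : v1 * qa ≤ R * a := by
        have h' : v1 * (μ - a) ≤ R * (a * (vbar - a)) := by linarith [hψa]
        rw [hqa_def, mul_div_assoc']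
        rw [div_le_iff₀ hvba]
        nlinarith [h']
      calc v1 * qa / hindsightOpt vbar (twoPoint a vbar qa)
          ≤ v1 * qa / a := div_le_div_of_nonneg_left (mul_nonneg h0 hqa0) ha0 hOPTa
        _ ≤ R * a / a := by apply div_le_div_of_nonneg_right hnum ha0.le
        _ = R := by field_simp
    · -- μ < v1 : point mass at μ
      have hdmem : Measure.dirac μ ∈ Fmean μ vbar := by
        refine ⟨inferInstance, Measure.dirac_apply_of_mem ⟨hμ.le, hμv.le⟩, ?_⟩
        rw [integral_dirac]
      refine key (Measure.dirac μ) hdmem ?_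
      have hval : Measure.dirac μ (Icc v1 vbar) = 0 := by
        rw [Measure.dirac_apply' _ measurableSet_Icc, Set.indicator_of_notMem]
        simp only [mem_Icc]
        push_neg
        intro h'
        linarith
      rw [hval]
      simp only [ENNReal.toReal_zero, mul_zero, zero_div]
      exact hR0.le
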